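/- Let G be a finite p-group with |G| ≥ p^3 and |G : G'| = p^2, and let H be a maximal subgroup of G. Then G/H' is a p-group of maximal class. -/

import Mathlib

open Subgroup
open scoped commutatorElement

universe u

section Helpers

variable {Q : Type u} [Group Q]

/-- If every pair of elements of a generating set commutes, the group is commutative. -/
lemma comm_of_closure_comm {S : Set Q} (hS : Subgroup.closure S = ⊤)
    (hc : ∀ a ∈ S, ∀ b ∈ S, a * b = b * a) (g h : Q) : g * h = h * g := by
  have step : ∀ s ∈ S, ∀ g : Q, s * g = g * s := by
    intro s hs g
    have h1 : Subgroup.closure S ≤ Subgroup.centralizer {s} := by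
      rw [Subgroup.closure_le]
      intro b hb
      rw [SetLike.mem_coe, Subgroup.mem_centralizer_iff]
      intro y hy
      rw [Set.mem_singleton_iff] at hy
      subst hy
      exact hc y hs b hb
    have hg : g ∈ Subgroup.centralizer {s} := h1 (by rw [hS]; trivial)
    exact Subgroup.mem_centralizer_iff.mp hg s rfl
  have h2 : Subgroup.closure S ≤ Subgroup.centralizer {g} := by
    rw [Subgroup.closure_le]
    intro b hb
    rw [SetLike.mem_coe, Subgroup.mem_centralizer_iff]
    intro y hy
    rw [Set.mem_singleton_iff] at hy
    subst hy
    exact (step b hb y).symm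
  have hh : h ∈ Subgroup.centralizer {g} := h2 (by rw [hS]; trivial)
  exact Subgroup.mem_centralizer_iff.mp hh g rfl

variable {p : ℕ}

lemma sup_zpowers_of_not_mem (hp : p.Prime) {A : Subgroup Q} (hA : A.index = p)
    {x : Q} (hx : x ∉ A) : A ⊔ Subgroup.zpowers x = ⊤ := by
  have hle : A ≤ A ⊔ Subgroup.zpowers x := le_sup_left
  have h1 : A.relIndex (A ⊔ Subgroup.zpowers x) * (A ⊔ Subgroup.zpowers x).index = p := by
    rw [Subgroup.relIndex_mul_index hle, hA]
  have hdvd : (A ⊔ Subgroup.zpowers x).index ∣ p := Dvd.intro_left _ h1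
  rcases hp.eq_one_or_self_of_dvd _ hdvd with h | h
  · exact Subgroup.index_eq_one.mp h
  · exfalso
    rw [h] at h1
    have h2 : A.relIndex (A ⊔ Subgroup.zpowers x) = 1 :=
      Nat.eq_of_mul_eq_mul_right hp.pos (by simpa using h1)
    have h3 : A ⊔ Subgroup.zpowers x ≤ A := Subgroup.relIndex_eq_one.mp h2
    exact hx (h3 (le_sup_right (α := Subgroup Q) (Subgroup.mem_zpowers x)))

lemma comm_le_of_index_prime [Finite Q] [Fact p.Prime] {A : Subgroup Q}
    (hAn : A.Normal) (hAi : A.index = p) : commutator Q ≤ A := by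
  have hcard : Nat.card (Q ⧸ A) = p := hAi
  haveI : IsCyclic (Q ⧸ A) := isCyclic_of_prime_card hcard
  letI : CommGroup (Q ⧸ A) := IsCyclic.commGroup
  rw [commutator_def, Subgroup.commutator_le]
  intro g _ h _
  have h1 : (QuotientGroup.mk' A) ⁅g, h⁆ = 1 := by
    rw [map_commutatorElement]
    exact commutatorElement_eq_one_iff_commute.mpr (mul_comm _ _)
  exact (QuotientGroup.eq_one_iff _).mp h1

lemma comm_eq_bot_of_le_lcs2 (hn : Group.IsNilpotent Q)
    (h : commutator Q ≤ Subgroup.lowerCentralSeries (⊤ : Subgroup Q) 2) : commutator Q = ⊥ := by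
  have h2 : Subgroup.lowerCentralSeries (⊤ : Subgroup Q) 2 = commutator Q := by
    refine le_antisymm ?_ h
    have := Subgroup.lowerCentralSeries_antitone (⊤ : Subgroup Q) (show 1 ≤ 2 by norm_num)
    rwa [Subgroup.top_lowerCentralSeries_one] at this
  have key : ∀ k, Subgroup.lowerCentralSeries (⊤ : Subgroup Q) (k + 1) = commutator Q := by
    intro k
    induction k with
    | zero => exact Subgroup.top_lowerCentralSeries_one
    | succ k ih =>
      rw [Subgroup.lowerCentralSeries_succ, ih, ← Subgroup.top_lowerCentralSeries_one (G := Q),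
        ← Subgroup.lowerCentralSeries_succ]
      exact h2
  obtain ⟨n, hn'⟩ := Subgroup.nilpotent_iff_lowerCentralSeries.mp hn
  cases n with
  | zero =>
    have htop : (⊤ : Subgroup Q) = ⊥ := by rwa [Subgroup.lowerCentralSeries_zero] at hn'
    exact le_bot_iff.mp (htop ▸ le_top)
  | succ k => rw [← key k]; exact hn'

/-- In a finite `p`-group, a nontrivial normal subgroup meets the center nontrivially. -/
lemma normal_inf_center [Finite Q] [Fact p.Prime] (hQ : IsPGroup p Q)
    (N : Subgroup Q) [hNn : N.Normal] (hN : N ≠ ⊥) :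
    ∃ z : Q, z ∈ N ∧ z ∈ Subgroup.center Q ∧ z ≠ 1 := by
  have hNp : IsPGroup p ↥N := hQ.to_subgroup N
  have hnt : Nontrivial ↥N := by
    rw [Subgroup.nontrivial_iff_ne_bot]; exact hN
  have hdvd : p ∣ Nat.card ↥N := by
    obtain ⟨n, hn0, hn⟩ := (IsPGroup.nontrivial_iff_card hNp).mp hnt
    rw [hn]
    exact dvd_pow_self p hn0.ne'
  have hconj : IsPGroup p (ConjAct Q) := hQ.of_equiv ConjAct.toConjAct
  have hfix : (1 : ↥N) ∈ MulAction.fixedPoints (ConjAct Q) ↥N := by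
    intro g; exact smul_one g
  obtain ⟨b, hb, hb1⟩ := hconj.exists_fixed_point_of_prime_dvd_card_of_fixed_point (α := ↥N)
    hdvd hfix
  refine ⟨↑b, b.2, ?_, ?_⟩
  · rw [Subgroup.mem_center_iff]
    intro g
    have h1 : (ConjAct.toConjAct g) • b = b := hb _
    have h2 : ((ConjAct.toConjAct g • b : ↥N) : Q) = g * ↑b * g⁻¹ := by
      rw [ConjAct.Subgroup.val_conj_smul]
      simp [ConjAct.toConjAct_smul]
    rw [h1] at h2
    calc g * ↑b = (g * ↑b * g⁻¹) * g := by group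
    _ = ↑b * g := by rw [← h2]
  · intro hb0
    apply hb1
    apply Subtype.ext
    simp [hb0]

end Helpers

section SL

variable {p : ℕ} {Q : Type u} [Group Q] [Finite Q] [Fact p.Prime]

lemma center_card_eq_prime {m : ℕ} (hm : 3 ≤ m) (hcard : Nat.card Q = p ^ m)
    (hidx : (commutator Q).index = p ^ 2)
    {A : Subgroup Q} (hAn : A.Normal) (hAi : A.index = p)
    (hAc : ∀ a ∈ A, ∀ b ∈ A, a * b = b * a) :
    Nat.card (Subgroup.center Q) = p := by
  have hpp : p.Prime := Fact.out
  -- commutator is nontrivial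
  have hne : commutator Q ≠ ⊥ := by
    intro h
    rw [h, Subgroup.index_bot, hcard] at hidx
    have := Nat.pow_right_injective hpp.two_le hidx
    omega
  -- the center is contained in A
  have hcenterA : Subgroup.center Q ≤ A := by
    by_contra hno
    obtain ⟨z, hz, hzA⟩ := SetLike.not_le_iff_exists.mp hno
    have hsupz : A ⊔ Subgroup.zpowers z = ⊤ := sup_zpowers_of_not_mem hpp hAi hzA
    have hclos : Subgroup.closure ((A : Set Q) ∪ {z}) = ⊤ := by
      rw [Subgroup.closure_union, Subgroup.closure_eq, ← Subgroup.zpowers_eq_closure]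
      exact hsupz
    have hcomm : ∀ a ∈ (A : Set Q) ∪ {z}, ∀ b ∈ (A : Set Q) ∪ {z}, a * b = b * a := by
      rintro a (ha | ha) b (hb | hb)
      · exact hAc a ha b hb
      · rw [Set.mem_singleton_iff] at hb; subst hb
        exact Subgroup.mem_center_iff.mp hz a
      · rw [Set.mem_singleton_iff] at ha; subst ha
        exact (Subgroup.mem_center_iff.mp hz b).symm
      · rw [Set.mem_singleton_iff] at ha hb; subst ha; subst hb; rfl
    apply hne
    rw [eq_bot_iff, _root_.commutator_def, Subgroup.commutator_le]
    intro g _ h _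
    rw [Subgroup.mem_bot]
    exact commutatorElement_eq_one_iff_commute.mpr (comm_of_closure_comm hclos hcomm g h)
  -- pick x outside A
  have hAne : A ≠ ⊤ := by
    intro h
    rw [h, Subgroup.index_top] at hAi
    exact hpp.one_lt.ne hAi
  obtain ⟨x, hx⟩ : ∃ x : Q, x ∉ A := by
    by_contra hno
    push_neg at hno
    exact hAne (Subgroup.eq_top_iff' A |>.mpr hno)
  have hsup : A ⊔ Subgroup.zpowers x = ⊤ := sup_zpowers_of_not_mem hpp hAi hx
  -- the commutator homomorphism f : A →* A, a ↦ ⁅x, a⁆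
  have hfmem : ∀ a : ↥A, ⁅x, (a : Q)⁆ ∈ A := by
    intro a
    rw [commutatorElement_def]
    exact mul_mem (hAn.conj_mem _ a.2 x) (inv_mem a.2)
  set f : ↥A →* ↥A :=
    { toFun := fun a => ⟨⁅x, (a : Q)⁆, hfmem a⟩
      map_one' := by
        apply Subtype.ext
        simpa using commutatorElement_one_right x
      map_mul' := by
        intro a b
        apply Subtype.ext
        show ⁅x, ((a * b : ↥A) : Q)⁆ = ⁅x, (a : Q)⁆ * ⁅x, (b : Q)⁆
        have key : (a : Q)⁻¹ * (x * b * x⁻¹ * (b : Q)⁻¹) = (x * b * x⁻¹ * (b : Q)⁻¹) * (a : Q)⁻¹ := by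
          have hbmem : x * (b : Q) * x⁻¹ * (b : Q)⁻¹ ∈ A := by
            simpa [commutatorElement_def] using hfmem b
          exact hAc _ (inv_mem a.2) _ hbmem
        push_cast
        rw [commutatorElement_def, commutatorElement_def, commutatorElement_def]
        calc x * ((a : Q) * b) * x⁻¹ * ((a : Q) * b)⁻¹
            = x * a * x⁻¹ * ((x * b * x⁻¹ * (b : Q)⁻¹) * (a : Q)⁻¹) := by group
        _ = x * a * x⁻¹ * ((a : Q)⁻¹ * (x * b * x⁻¹ * (b : Q)⁻¹)) := by rw [← key]
        _ = x * a * x⁻¹ * (a : Q)⁻¹ * (x * b * x⁻¹ * (b : Q)⁻¹) := by group } with hf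
  have hfval : ∀ a : ↥A, (f a : Q) = ⁅x, (a : Q)⁆ := fun a => rfl
  -- kernel of f is the center
  have hker : ∀ a : ↥A, f a = 1 ↔ (a : Q) ∈ Subgroup.center Q := by
    intro a
    constructor
    · intro h1
      have h2 : ⁅x, (a : Q)⁆ = 1 := by
        have := congrArg (Subtype.val) h1
        simpa [hfval] using this
      have hcomm : Commute x (a : Q) := commutatorElement_eq_one_iff_commute.mp h2
      rw [Subgroup.mem_center_iff]
      intro g
      have hle : A ⊔ Subgroup.zpowers x ≤ Subgroup.centralizer {(a : Q)} := by
        refine sup_le ?_ ?_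
        · intro b hb
          rw [Subgroup.mem_centralizer_iff]
          intro y hy
          rw [Set.mem_singleton_iff] at hy; subst hy
          exact hAc _ a.2 _ hb
        · rw [Subgroup.zpowers_le]
          rw [Subgroup.mem_centralizer_iff]
          intro y hy
          rw [Set.mem_singleton_iff] at hy; subst hy
          exact hcomm.symm
      have hg : g ∈ Subgroup.centralizer {(a : Q)} := by
        rw [hsup] at hle
        exact hle trivial
      exact (Subgroup.mem_centralizer_iff.mp hg _ rfl).symm
    · intro h
      apply Subtype.ext
      show ⁅x, (a : Q)⁆ = 1
      exact commutatorElement_eq_one_iff_commute.mpr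
        (Subgroup.mem_center_iff.mp h x)
  -- the image subgroup N
  set N : Subgroup Q := (f.range).map A.subtype with hNdef
  have hNA : N ≤ A := Subgroup.map_subtype_le _
  have hmemN : ∀ a ∈ A, ⁅x, a⁆ ∈ N := by
    intro a ha
    exact ⟨f ⟨a, ha⟩, ⟨⟨a, ha⟩, rfl⟩, rfl⟩
  have hNform : ∀ n ∈ N, ∃ a ∈ A, n = ⁅x, a⁆ := by
    rintro n ⟨-, ⟨a, rfl⟩, rfl⟩
    exact ⟨a, a.2, rfl⟩
  -- N is normal
  have hNnormal : N.Normal := by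
    have hnorm : A ⊔ Subgroup.zpowers x ≤ Subgroup.normalizer (N : Set Q) := by
      refine sup_le ?_ ?_
      · intro c hc
        rw [Subgroup.mem_normalizer_iff]
        intro h
        constructor
        · intro hh
          have heq : c * h * c⁻¹ = h := by
            rw [hAc c hc h (hNA hh)]; group
          rwa [heq]
        · intro hh
          have hhA : h ∈ A := by
            have h1 : c⁻¹ * (c * h * c⁻¹) * (c⁻¹)⁻¹ ∈ A := hAn.conj_mem _ (hNA hh) c⁻¹
            simpa [mul_assoc] using h1
          have heq : c * h * c⁻¹ = h := by
            rw [hAc c hc h hhA]; group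
          rwa [heq] at hh
      · rw [Subgroup.zpowers_le, Subgroup.mem_normalizer_iff]
        intro h
        constructor
        · intro hh
          obtain ⟨a, ha, rfl⟩ := hNform h hh
          have h1 : x * ⁅x, a⁆ * x⁻¹ = ⁅x, x * a * x⁻¹⁆ := by
            rw [commutatorElement_def, commutatorElement_def]; group
          rw [h1]
          exact hmemN _ (hAn.conj_mem _ ha x)
        · intro hh
          obtain ⟨a, ha, hEq⟩ := hNform _ hh
          have h2 : h = ⁅x, x⁻¹ * a * x⁆ := by
            have : h = x⁻¹ * (x * h * x⁻¹) * x := by group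
            rw [this, hEq, commutatorElement_def, commutatorElement_def]; group
          rw [h2]
          apply hmemN
          have := hAn.conj_mem _ ha x⁻¹
          simpa using this
    refine { conj_mem := ?_ }
    intro n hn g
    have hg : g ∈ Subgroup.normalizer (N : Set Q) := by
      rw [hsup] at hnorm
      exact hnorm trivial
    exact (Subgroup.mem_normalizer_iff.mp hg n).mp hn
  haveI := hNnormal
  -- N is the commutator subgroup
  have hNle : N ≤ _root_.commutator Q := by
    intro n hn
    obtain ⟨a, _, rfl⟩ := hNform n hn
    rw [_root_.commutator_def]
    exact Subgroup.commutator_mem_commutator (mem_top x) (mem_top a)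
  have hNcomm : _root_.commutator Q ≤ N := by
    set φ := QuotientGroup.mk' N with hφ
    have hφs : Function.Surjective φ := QuotientGroup.mk'_surjective N
    set S : Set (Q ⧸ N) := φ '' ((A : Set Q) ∪ {x}) with hS
    have hgen : Subgroup.closure S = ⊤ := by
      rw [hS, ← MonoidHom.map_closure, Subgroup.closure_union, Subgroup.closure_eq,
        ← Subgroup.zpowers_eq_closure, hsup]
      exact Subgroup.map_top_of_surjective φ hφs
    have hcommS : ∀ a ∈ S, ∀ b ∈ S, a * b = b * a := by
      rintro - ⟨u, hu, rfl⟩ - ⟨v, hv, rfl⟩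
      have huv : ⁅u, v⁆ ∈ N := by
        rcases hu with hu | hu <;> rcases hv with hv | hv
        · have : ⁅u, v⁆ = 1 := commutatorElement_eq_one_iff_commute.mpr (hAc u hu v hv)
          rw [this]; exact one_mem N
        · rw [Set.mem_singleton_iff] at hv; subst hv
          rw [← commutatorElement_inv]
          exact inv_mem (hmemN u hu)
        · rw [Set.mem_singleton_iff] at hu; subst hu
          exact hmemN v hv
        · rw [Set.mem_singleton_iff] at hu hv; subst hu; subst hv
          rw [commutatorElement_self]; exact one_mem N
      have h1 : φ ⁅u, v⁆ = 1 := (QuotientGroup.eq_one_iff _).mpr huv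
      rw [map_commutatorElement] at h1
      exact commutatorElement_eq_one_iff_commute.mp h1
    rw [_root_.commutator_def, Subgroup.commutator_le]
    intro g _ h _
    have hcom := comm_of_closure_comm hgen hcommS (φ g) (φ h)
    have h2 : φ ⁅g, h⁆ = 1 := by
      rw [map_commutatorElement]
      exact commutatorElement_eq_one_iff_commute.mpr hcom
    exact (QuotientGroup.eq_one_iff _).mp h2
  have hNeq : N = _root_.commutator Q := le_antisymm hNle hNcomm
  -- counting
  have hppos : 0 < p := hpp.pos
  have hcA : Nat.card ↥A = p ^ (m - 1) := by
    have h1 := A.card_mul_index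
    rw [hAi, hcard] at h1
    have h2 : p ^ m = p ^ (m - 1) * p := by
      rw [← pow_succ]
      congr 1
      omega
    rw [h2] at h1
    exact Nat.eq_of_mul_eq_mul_right hppos h1
  have hcN : Nat.card ↥N = p ^ (m - 2) := by
    have h1 := (_root_.commutator Q).card_mul_index
    rw [hidx, hcard] at h1
    have h2 : p ^ m = p ^ (m - 2) * p ^ 2 := by
      rw [← pow_add]
      congr 1
      omega
    rw [h2] at h1
    rw [hNeq]
    exact Nat.eq_of_mul_eq_mul_right (pow_pos hppos 2) h1
  have hkerc : Nat.card f.ker = Nat.card (Subgroup.center Q) := by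
    apply Nat.card_congr
    refine ⟨fun a => ⟨↑↑a, (hker _).mp a.2⟩,
      fun z => ⟨⟨↑z, hcenterA z.2⟩, by rw [MonoidHom.mem_ker]; exact (hker _).mpr z.2⟩, ?_, ?_⟩
    · intro a; ext; rfl
    · intro z; ext; rfl
  have hrangec : Nat.card f.range = p ^ (m - 2) := by
    rw [← hcN, hNdef]
    exact Nat.card_congr (Subgroup.equivMapOfInjective f.range A.subtype
      A.subtype_injective).toEquiv
  have hcount : Nat.card ↥A = Nat.card f.range * Nat.card f.ker := by
    rw [Subgroup.card_eq_card_quotient_mul_card_subgroup f.ker]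
    congr 1
    exact Nat.card_congr (QuotientGroup.quotientKerEquivRange f).toEquiv
  rw [hcA, hrangec, hkerc] at hcount
  have h2 : p ^ (m - 1) = p ^ (m - 2) * p := by
    rw [← pow_succ]
    congr 1
    omega
  rw [h2] at hcount
  exact Nat.eq_of_mul_eq_mul_left (pow_pos hppos (m - 2)) hcount.symm

end SL

section Rest

variable {p : ℕ} {Q : Type u} [Group Q] [Finite Q] [Fact p.Prime]

lemma center_le_comm (hQ : IsPGroup p Q) (hZ : Nat.card (Subgroup.center Q) = p)
    (hne : commutator Q ≠ ⊥) : Subgroup.center Q ≤ commutator Q := by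
  obtain ⟨z, hzc, hzZ, hz1⟩ := normal_inf_center hQ (commutator Q) hne
  have h1 : Subgroup.zpowers z ≤ Subgroup.center Q := Subgroup.zpowers_le.mpr hzZ
  have hcz : Nat.card (Subgroup.zpowers z) = p := by
    have hdvd : Nat.card (Subgroup.zpowers z) ∣ p := hZ ▸ Subgroup.card_dvd_of_le h1
    have hne1 : Nat.card (Subgroup.zpowers z) ≠ 1 := by
      rw [Nat.card_zpowers]
      intro h
      exact hz1 (orderOf_eq_one_iff.mp h)
    rcases (Fact.out : p.Prime).eq_one_or_self_of_dvd _ hdvd with h | h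
    · exact absurd h hne1
    · exact h
  -- equal cardinalities force equality
  have hzi : (Subgroup.zpowers z).index = (Subgroup.center Q).index := by
    have e1 := (Subgroup.zpowers z).card_mul_index
    have e2 := (Subgroup.center Q).card_mul_index
    rw [hcz] at e1
    rw [hZ] at e2
    have : p * (Subgroup.zpowers z).index = p * (Subgroup.center Q).index := by
      rw [e1, e2]
    exact Nat.eq_of_mul_eq_mul_left (Fact.out : p.Prime).pos this
  have hrel := Subgroup.relIndex_mul_index h1
  rw [hzi] at hrel
  have hipos : (Subgroup.center Q).index ≠ 0 := by
    exact Subgroup.index_ne_zero_of_finite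
  have hrel1 : (Subgroup.zpowers z).relIndex (Subgroup.center Q) = 1 :=
    Nat.eq_of_mul_eq_mul_right (Nat.pos_of_ne_zero hipos) (by rw [hrel, one_mul])
  have h2 : Subgroup.center Q ≤ Subgroup.zpowers z := Subgroup.relIndex_eq_one.mp hrel1
  exact h2.trans (Subgroup.zpowers_le.mpr hzc)

lemma maxsub_comm_le {G : Type u} [Group G] [Finite G] [Fact p.Prime]
    (hidx : (commutator G).index = p ^ 2)
    {H : Subgroup G} (hH : H.index = p) (hHn : H.Normal) :
    ⁅H, H⁆ ≤ Subgroup.lowerCentralSeries (⊤ : Subgroup G) 2 := by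
  set π := QuotientGroup.mk' (Subgroup.lowerCentralSeries (⊤ : Subgroup G) 2) with hπ
  have hle23 : Subgroup.lowerCentralSeries (⊤ : Subgroup G) 2 ≤ commutator G := by
    have := Subgroup.lowerCentralSeries_antitone (⊤ : Subgroup G) (show 1 ≤ 2 by norm_num)
    rwa [Subgroup.top_lowerCentralSeries_one] at this
  set ψ : (G ⧸ Subgroup.lowerCentralSeries (⊤ : Subgroup G) 2) →* (G ⧸ commutator G) :=
    QuotientGroup.map _ _ (MonoidHom.id G) (by simpa using hle23) with hψ
  have hcomm_le_H : commutator G ≤ H := comm_le_of_index_prime hHn hH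
  set T := H.map (QuotientGroup.mk' (commutator G)) with hT
  have hTidx : T.index = p := by
    rw [hT, Subgroup.index_map_eq _ (QuotientGroup.mk'_surjective _)
      (by rw [QuotientGroup.ker_mk']; exact hcomm_le_H)]
    exact hH
  have hTcard : Nat.card ↥T = p := by
    have h1 := T.card_mul_index
    have h2 : Nat.card (G ⧸ commutator G) = p ^ 2 := hidx
    rw [hTidx, h2] at h1
    have : Nat.card ↥T * p = p * p := by rw [h1]; ring
    exact Nat.eq_of_mul_eq_mul_right (Fact.out : p.Prime).pos this
  haveI : IsCyclic ↥T := isCyclic_of_prime_card hTcard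
  set K := H.map π with hK
  have hψK : ∀ k : ↥K, ψ (↑k : G ⧸ Subgroup.lowerCentralSeries (⊤ : Subgroup G) 2) ∈ T := by
    rintro ⟨-, h, hh, rfl⟩
    have : ψ (π h) = QuotientGroup.mk' (commutator G) h := by
      rw [hψ, hπ, QuotientGroup.map_mk']
      rfl
    rw [this]
    exact Subgroup.mem_map_of_mem _ hh
  set f : ↥K →* ↥T := (ψ.comp K.subtype).codRestrict T hψK with hfdef
  have hker : f.ker ≤ Subgroup.center ↥K := by
    rintro ⟨k, hk⟩ hfk
    have hψ1 : ψ k = 1 := by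
      have := congrArg Subtype.val hfk
      exact this
    obtain ⟨g, rfl⟩ := QuotientGroup.mk'_surjective _ k
    have hg : g ∈ commutator G := by
      have h1 : ψ (π g) = QuotientGroup.mk' (commutator G) g := by
        rw [hψ, hπ, QuotientGroup.map_mk']
        rfl
      rw [h1] at hψ1
      rwa [← QuotientGroup.ker_mk' (commutator G), MonoidHom.mem_ker]
    rw [Subgroup.mem_center_iff]
    rintro ⟨b, hb⟩
    apply Subtype.ext
    show b * π g = π g * b
    obtain ⟨u, rfl⟩ := QuotientGroup.mk'_surjective _ b
    have hcom : ⁅g, u⁆ ∈ Subgroup.lowerCentralSeries (⊤ : Subgroup G) 2 := by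
      have h3 : ⁅g, u⁆ ∈ ⁅Subgroup.lowerCentralSeries (⊤ : Subgroup G) 1, ⊤⁆ :=
        Subgroup.commutator_mem_commutator (by rwa [Subgroup.top_lowerCentralSeries_one]) (mem_top u)
      exact h3
    have h1 : π ⁅g, u⁆ = 1 := (QuotientGroup.eq_one_iff _).mpr hcom
    rw [map_commutatorElement] at h1
    exact (commutatorElement_eq_one_iff_commute.mp h1).symm
  have hKcomm := commutative_of_cyclic_center_quotient f hker
  rw [Subgroup.commutator_le]
  intro h₁ hh₁ h₂ hh₂
  have e := hKcomm ⟨π h₁, Subgroup.mem_map_of_mem π hh₁⟩ ⟨π h₂, Subgroup.mem_map_of_mem π hh₂⟩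
  have e2 : π h₁ * π h₂ = π h₂ * π h₁ := congrArg Subtype.val e
  have h1 : π ⁅h₁, h₂⁆ = 1 := by
    rw [map_commutatorElement]
    exact commutatorElement_eq_one_iff_commute.mpr e2
  exact (QuotientGroup.eq_one_iff _).mp h1

end Rest

lemma maximal_class (p : ℕ) [Fact p.Prime] :
    ∀ (m : ℕ) (Q : Type u) [Group Q] [Finite Q],
      IsPGroup p Q → 3 ≤ m → Nat.card Q = p ^ m → (commutator Q).index = p ^ 2 →
      ∀ A : Subgroup Q, A.Normal → A.index = p → (∀ a ∈ A, ∀ b ∈ A, a * b = b * a) →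
      ∀ (hn : Group.IsNilpotent Q), Group.nilpotencyClass Q = m - 1 := by
  intro m
  induction m using Nat.strong_induction_on with
  | _ m IH =>
  intro Q _ _ hQ hm hcard hidx A hAn hAi hAc hn
  haveI := hn
  have hpp : p.Prime := Fact.out
  haveI : Nontrivial Q := by
    apply Finite.one_lt_card_iff_nontrivial.mp
    rw [hcard]
    exact Nat.one_lt_pow (by omega) hpp.one_lt
  have hZ := center_card_eq_prime hm hcard hidx hAn hAi hAc
  have hcq : Nat.card (Q ⧸ Subgroup.center Q) = p ^ (m - 1) := by
    have h1 := (Subgroup.center Q).card_mul_index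
    rw [hZ, hcard] at h1
    have h2 : p ^ m = p * p ^ (m - 1) := by
      rw [← pow_succ']
      congr 1
      omega
    rw [h2] at h1
    exact Nat.eq_of_mul_eq_mul_left hpp.pos h1
  haveI : Group.IsNilpotent (Q ⧸ Subgroup.center Q) := (hQ.to_quotient _).isNilpotent
  rcases eq_or_lt_of_le hm with hm3 | hm4
  · -- base case m = 3
    subst hm3
    have habel : ∀ a b : Q ⧸ Subgroup.center Q, a * b = b * a :=
      IsPGroup.commutative_of_card_eq_prime_sq (by rw [hcq])
    have h1 : Group.nilpotencyClass (Q ⧸ Subgroup.center Q) ≤ 1 := by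
      rw [← Subgroup.lowerCentralSeries_eq_bot_iff_nilpotencyClass_le]
      rw [Subgroup.top_lowerCentralSeries_one, eq_bot_iff, _root_.commutator_def, Subgroup.commutator_le]
      intro g _ h _
      rw [Subgroup.mem_bot]
      exact commutatorElement_eq_one_iff_commute.mpr (habel g h)
    have h2 : Group.nilpotencyClass (Q ⧸ Subgroup.center Q) ≠ 0 := by
      intro h0
      rw [nilpotencyClass_zero_iff_subsingleton] at h0
      have hle1 := Finite.card_le_one_iff_subsingleton.mpr h0
      have hgt : 1 < p ^ (3 - 1) := Nat.one_lt_pow (by norm_num) hpp.one_lt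
      rw [hcq] at hle1
      omega
    have h3 := nilpotencyClass_eq_quotient_center_plus_one (G := Q)
    omega
  · -- inductive step m ≥ 4
    have hne : commutator Q ≠ ⊥ := by
      intro h
      rw [h, Subgroup.index_bot, hcard] at hidx
      have := Nat.pow_right_injective hpp.two_le hidx
      omega
    have hZle := center_le_comm hQ hZ hne
    set φ := QuotientGroup.mk' (Subgroup.center Q) with hφ
    have hφs := QuotientGroup.mk'_surjective (Subgroup.center Q)
    have hcommmap : commutator (Q ⧸ Subgroup.center Q) = (commutator Q).map φ := by
      have htop : Subgroup.map φ ⊤ = ⊤ := Subgroup.map_top_of_surjective φ hφs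
      rw [_root_.commutator_def, _root_.commutator_def, Subgroup.map_commutator, htop]
    have hidx' : (commutator (Q ⧸ Subgroup.center Q)).index = p ^ 2 := by
      rw [hcommmap, Subgroup.index_map_eq _ hφs (by rw [QuotientGroup.ker_mk']; exact hZle)]
      exact hidx
    have hQA : commutator Q ≤ A := comm_le_of_index_prime hAn hAi
    have hZA : Subgroup.center Q ≤ A := hZle.trans hQA
    have hAidx' : (A.map φ).index = p := by
      rw [Subgroup.index_map_eq _ hφs (by rw [QuotientGroup.ker_mk']; exact hZA)]
      exact hAi
    have hAcomm' : ∀ a ∈ A.map φ, ∀ b ∈ A.map φ, a * b = b * a := by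
      rintro - ⟨a, ha, rfl⟩ - ⟨b, hb, rfl⟩
      rw [← map_mul, ← map_mul, hAc a ha b hb]
    have hclassQZ := IH (m - 1) (by omega) (Q ⧸ Subgroup.center Q) (hQ.to_quotient _)
      (by omega) hcq hidx' (A.map φ) (hAn.map φ hφs) hAidx' hAcomm'
      ((hQ.to_quotient _).isNilpotent)
    have h3 := nilpotencyClass_eq_quotient_center_plus_one (G := Q)
    rw [hclassQZ] at h3
    omega

/-- Let `G` be a finite `p`-group with `|G| ≥ p^3` and `|G : G'| = p^2`, and let `H` be a
maximal (hence normal) subgroup of `G`. Then `G/H'` is a `p`-group of maximal class. -/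
theorem stmt6 (p : ℕ) [Fact p.Prime] (G : Type*) [Group G] [Finite G]
    (hG : IsPGroup p G) (hcard : p ^ 3 ≤ Nat.card G)
    (hidx : (commutator G).index = p ^ 2)
    (H : Subgroup G) (hH : H.index = p) (hHn : H.Normal) :
    ∃ m : ℕ, 3 ≤ m ∧ Nat.card (G ⧸ (⁅H, H⁆ : Subgroup G)) = p ^ m ∧
      Group.nilpotencyClass (G ⧸ (⁅H, H⁆ : Subgroup G)) = m - 1 := by
  haveI := hHn
  have hpp : p.Prime := Fact.out
  haveI hNn : (⁅H, H⁆ : Subgroup G).Normal := Subgroup.commutator_normal H H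
  haveI := hG.isNilpotent
  have hNle : (⁅H, H⁆ : Subgroup G) ≤ commutator G := by
    rw [_root_.commutator_def]
    exact Subgroup.commutator_mono le_top le_top
  have hγ : (⁅H, H⁆ : Subgroup G) ≤ Subgroup.lowerCentralSeries (⊤ : Subgroup G) 2 := maxsub_comm_le hidx hH hHn
  have hle23 : Subgroup.lowerCentralSeries (⊤ : Subgroup G) 2 ≤ commutator G := by
    have := Subgroup.lowerCentralSeries_antitone (⊤ : Subgroup G) (show 1 ≤ 2 by norm_num)
    rwa [Subgroup.top_lowerCentralSeries_one] at this
  have hcommne : commutator G ≠ ⊥ := by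
    intro h
    rw [h, Subgroup.index_bot] at hidx
    rw [hidx] at hcard
    have h2 : p ^ 2 < p ^ 3 := Nat.pow_lt_pow_right hpp.one_lt (by norm_num)
    omega
  obtain ⟨m, hmcard⟩ := IsPGroup.iff_card.mp (hG.to_quotient (⁅H, H⁆ : Subgroup G))
  have hNidx : (⁅H, H⁆ : Subgroup G).index = p ^ m := hmcard
  have hm3 : 3 ≤ m := by
    by_contra hlt
    push_neg at hlt
    have hdvd1 : (Subgroup.lowerCentralSeries (⊤ : Subgroup G) 2).index ∣ (⁅H, H⁆ : Subgroup G).index :=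
      Subgroup.index_dvd_of_le hγ
    have hdvd2 : (commutator G).index ∣ (Subgroup.lowerCentralSeries (⊤ : Subgroup G) 2).index :=
      Subgroup.index_dvd_of_le hle23
    rw [hidx] at hdvd2
    rw [hNidx] at hdvd1
    have h3 : p ^ m ∣ p ^ 2 := pow_dvd_pow p (by omega)
    have hd : (Subgroup.lowerCentralSeries (⊤ : Subgroup G) 2).index = p ^ 2 :=
      Nat.dvd_antisymm (hdvd1.trans h3) hdvd2
    have h5 := Subgroup.relIndex_mul_index hle23
    rw [hidx, hd] at h5
    have h6 : (Subgroup.lowerCentralSeries (⊤ : Subgroup G) 2).relIndex (commutator G) = 1 :=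
      Nat.eq_of_mul_eq_mul_right (pow_pos hpp.pos 2) (by rw [h5, one_mul])
    have h7 : commutator G ≤ Subgroup.lowerCentralSeries (⊤ : Subgroup G) 2 := Subgroup.relIndex_eq_one.mp h6
    exact hcommne (comm_eq_bot_of_le_lcs2 inferInstance h7)
  have hcomm_le_H : commutator G ≤ H := comm_le_of_index_prime hHn hH
  have hNH : (⁅H, H⁆ : Subgroup G) ≤ H := hNle.trans hcomm_le_H
  set φ := QuotientGroup.mk' (⁅H, H⁆ : Subgroup G) with hφ
  have hφs := QuotientGroup.mk'_surjective (⁅H, H⁆ : Subgroup G)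
  have hidxQ : (commutator (G ⧸ (⁅H, H⁆ : Subgroup G))).index = p ^ 2 := by
    have htop : Subgroup.map φ ⊤ = ⊤ := Subgroup.map_top_of_surjective φ hφs
    have hcm : commutator (G ⧸ (⁅H, H⁆ : Subgroup G)) = (commutator G).map φ := by
      rw [_root_.commutator_def, _root_.commutator_def, Subgroup.map_commutator, htop]
    rw [hcm, Subgroup.index_map_eq _ hφs (by rw [QuotientGroup.ker_mk']; exact hNle)]
    exact hidx
  have hAn' : (H.map φ).Normal := hHn.map φ hφs
  have hAidx' : (H.map φ).index = p := by
    rw [Subgroup.index_map_eq _ hφs (by rw [QuotientGroup.ker_mk']; exact hNH)]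
    exact hH
  have hAcomm' : ∀ a ∈ H.map φ, ∀ b ∈ H.map φ, a * b = b * a := by
    rintro - ⟨a, ha, rfl⟩ - ⟨b, hb, rfl⟩
    have h1 : φ ⁅a, b⁆ = 1 :=
      (QuotientGroup.eq_one_iff _).mpr (Subgroup.commutator_mem_commutator ha hb)
    rw [map_commutatorElement] at h1
    exact commutatorElement_eq_one_iff_commute.mp h1
  refine ⟨m, hm3, hmcard, ?_⟩
  exact maximal_class p m (G ⧸ (⁅H, H⁆ : Subgroup G)) (hG.to_quotient _) hm3 hmcard hidxQ
    (H.map φ) hAn' hAidx' hAcomm' (hG.to_quotient _).isNilpotent
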